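/- Let α, β, γ be pairwise non-proportional linear forms and φ = α²βγ ∈ S⁴. Then conf(φ) = 0; that is, if A ∈ sl₂(ℂ) satisfies A·φ = cφ for some c ∈ ℂ, then A = 0. -/

import Mathlib

open MvPolynomial

/-- The action of `A ∈ sl₂(ℂ)` on `ℂ[x,y]` by derivations:
`A·f = −(a x + c y) ∂f/∂x − (b x + d y) ∂f/∂y` for `A = [[a,b],[c,d]]`. -/
noncomputable def sAct (A : Matrix (Fin 2) (Fin 2) ℂ) (f : MvPolynomial (Fin 2) ℂ) :
    MvPolynomial (Fin 2) ℂ :=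
  -((C (A 0 0) * X 0 + C (A 1 0) * X 1) * pderiv 0 f)
    - ((C (A 0 1) * X 0 + C (A 1 1) * X 1) * pderiv 1 f)

/-- A linear form: a nonzero homogeneous degree-1 polynomial in `ℂ[x,y]`. -/
def IsLinForm (α : MvPolynomial (Fin 2) ℂ) : Prop := α ≠ 0 ∧ α.IsHomogeneous 1

noncomputable def Lf (v w : ℂ) : MvPolynomial (Fin 2) ℂ := C v * X 0 + C w * X 1

lemma fin2_degree (m : Fin 2 →₀ ℕ) : m.degree = m 0 + m 1 := by
  rw [Finsupp.degree_apply, Finset.sum_subset (Finset.subset_univ _)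
    (fun x _ hx => Finsupp.notMem_support_iff.mp hx), Fin.sum_univ_two]

lemma linform_struct (α : MvPolynomial (Fin 2) ℂ) (h : α.IsHomogeneous 1) :
    ∃ v w : ℂ, α = Lf v w := by
  refine ⟨coeff (Finsupp.single 0 1) α, coeff (Finsupp.single 1 1) α, ?_⟩
  rw [Lf]
  ext m
  simp only [coeff_add, coeff_C_mul, coeff_X']
  by_cases h0 : m = Finsupp.single 0 1
  · subst h0; simp [Finsupp.single_eq_single_iff]
  by_cases h1 : m = Finsupp.single 1 1
  · subst h1; simp [Finsupp.single_eq_single_iff]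
  · rw [if_neg (Ne.symm h0), if_neg (Ne.symm h1)]
    simp only [mul_zero, add_zero]
    refine h.coeff_eq_zero ?_
    intro hd
    rw [fin2_degree] at hd
    rcases Nat.eq_zero_or_pos (m 0) with hz | hpos
    · apply h1
      ext i
      fin_cases i <;> simp_all [Finsupp.single_apply]
    · apply h0
      ext i
      fin_cases i <;> simp_all [Finsupp.single_apply] <;> omega

lemma pderiv0_Lf (v w : ℂ) : pderiv 0 (Lf v w) = C v := by
  simp [Lf, pderiv_X]

lemma pderiv1_Lf (v w : ℂ) : pderiv 1 (Lf v w) = C w := by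
  simp [Lf, pderiv_X]

lemma eval_Lf (z : Fin 2 → ℂ) (v w : ℂ) : eval z (Lf v w) = v * z 0 + w * z 1 := by
  simp [Lf]

lemma sAct_Lf (A : Matrix (Fin 2) (Fin 2) ℂ) (v w : ℂ) :
    sAct A (Lf v w) = Lf (-(A 0 0 * v + A 0 1 * w)) (-(A 1 0 * v + A 1 1 * w)) := by
  simp only [sAct, pderiv0_Lf, pderiv1_Lf]
  simp only [Lf, map_neg, map_add, map_mul]
  ring

lemma sAct_mul (A : Matrix (Fin 2) (Fin 2) ℂ) (f g : MvPolynomial (Fin 2) ℂ) :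
    sAct A (f * g) = sAct A f * g + f * sAct A g := by
  simp only [sAct, pderiv_mul]
  ring

lemma Lf_smul (c v w : ℂ) : c • Lf v w = Lf (c * v) (c * w) := by
  simp only [Lf, smul_eq_C_mul, map_mul]
  ring

lemma Lf_ne_zero_iff (v w : ℂ) : Lf v w = 0 ↔ v = 0 ∧ w = 0 := by
  constructor
  · intro h
    have h0 := congrArg (eval ![1, 0]) h
    have h1 := congrArg (eval ![0, 1]) h
    simp [eval_Lf] at h0 h1
    exact ⟨h0, h1⟩
  · rintro ⟨rfl, rfl⟩; simp [Lf]

lemma nonprop_det (p q r s : ℂ) (hβ : Lf r s ≠ 0)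
    (hnp : ∀ c : ℂ, Lf p q ≠ c • Lf r s) : p * s - q * r ≠ 0 := by
  intro hdet
  have hrs : r ≠ 0 ∨ s ≠ 0 := by
    by_contra hc
    push_neg at hc
    exact hβ ((Lf_ne_zero_iff r s).mpr ⟨hc.1, hc.2⟩)
  rcases hrs with hr | hs
  · refine hnp (p / r) ?_
    rw [Lf_smul]
    have h1 : p = p / r * r := by field_simp
    have h2 : q = p / r * s := by field_simp; linear_combination -hdet
    rw [← h1, ← h2]
  · refine hnp (q / s) ?_
    rw [Lf_smul]
    have h1 : p = q / s * r := by field_simp; linear_combination hdet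
    have h2 : q = q / s * s := by field_simp
    rw [← h1, ← h2]

/-- Petrov type (211)=(II): for `φ = α²βγ` with `α,β,γ` pairwise non-proportional
linear forms, `conf(φ) = 0`. -/
theorem conf_type_II_eq_zero (α β γ : MvPolynomial (Fin 2) ℂ)
    (hα : IsLinForm α) (hβ : IsLinForm β) (hγ : IsLinForm γ)
    (hαβ : ∀ c : ℂ, α ≠ c • β) (hαγ : ∀ c : ℂ, α ≠ c • γ) (hβγ : ∀ c : ℂ, β ≠ c • γ)
    (A : Matrix (Fin 2) (Fin 2) ℂ) (hA : A.trace = 0)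
    (c : ℂ) (h : sAct A (α ^ 2 * β * γ) = c • (α ^ 2 * β * γ)) :
    A = 0 := by
  obtain ⟨p, q, hαL⟩ := linform_struct α hα.2
  obtain ⟨r, s, hβL⟩ := linform_struct β hβ.2
  obtain ⟨u, t, hγL⟩ := linform_struct γ hγ.2
  have hα0 : ¬(p = 0 ∧ q = 0) := fun hc => hα.1 (by rw [hαL, (Lf_ne_zero_iff p q).mpr hc])
  have hβ0 : Lf r s ≠ 0 := hβL ▸ hβ.1
  have hγ0 : Lf u t ≠ 0 := hγL ▸ hγ.1
  have d1 : p * s - q * r ≠ 0 :=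
    nonprop_det p q r s hβ0 (fun cc hc => hαβ cc (by rw [hαL, hβL]; exact hc))
  have d2 : p * t - q * u ≠ 0 :=
    nonprop_det p q u t hγ0 (fun cc hc => hαγ cc (by rw [hαL, hγL]; exact hc))
  have d3 : r * t - s * u ≠ 0 :=
    nonprop_det r s u t hγ0 (fun cc hc => hβγ cc (by rw [hβL, hγL]; exact hc))
  have htr : A 0 0 + A 1 1 = 0 := by rwa [Matrix.trace_fin_two] at hA
  set a := A 0 0 with ha
  set b := A 0 1 with hb
  set k := A 1 0 with hk
  set d := A 1 1 with hd
  rw [hαL, hβL, hγL, smul_eq_C_mul, pow_two] at h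
  simp only [sAct_mul, sAct_Lf] at h
  -- eigen condition for β
  have hB := h
  apply_fun (eval ![-s, r]) at hB
  simp only [map_add, map_mul, eval_Lf, eval_C, Matrix.cons_val_zero, Matrix.cons_val_one,
    Matrix.head_cons] at hB
  have keyβ : ((q*r - p*s)^2 * (t*r - u*s)) * ((a*r + b*s)*s - (k*r + d*s)*r) = 0 := by
    linear_combination hB
  have eigβ : (a*r + b*s)*s - (k*r + d*s)*r = 0 := by
    rcases mul_eq_zero.mp keyβ with hc | hc
    · exfalso
      rcases mul_eq_zero.mp hc with hc' | hc'
      · exact d1 (by have := pow_eq_zero_iff (n := 2) (by norm_num) |>.mp hc'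
                     linear_combination -this)
      · exact d3 (by linear_combination hc')
    · exact hc
  -- eigen condition for γ
  have hG := h
  apply_fun (eval ![-t, u]) at hG
  simp only [map_add, map_mul, eval_Lf, eval_C, Matrix.cons_val_zero, Matrix.cons_val_one,
    Matrix.head_cons] at hG
  have keyγ : ((q*u - p*t)^2 * (s*u - r*t)) * ((a*u + b*t)*t - (k*u + d*t)*u) = 0 := by
    linear_combination hG
  have eigγ : (a*u + b*t)*t - (k*u + d*t)*u = 0 := by
    rcases mul_eq_zero.mp keyγ with hc | hc
    · exfalso
      rcases mul_eq_zero.mp hc with hc' | hc'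
      · exact d2 (by have := pow_eq_zero_iff (n := 2) (by norm_num) |>.mp hc'
                     linear_combination -this)
      · exact d3 (by linear_combination -hc')
    · exact hc
  -- eigen condition for α (via first derivatives)
  have h0 := h
  apply_fun (pderiv 0) at h0
  simp only [map_add, pderiv_mul, pderiv0_Lf, pderiv1_Lf, pderiv_C] at h0
  apply_fun (eval ![-q, p]) at h0
  simp only [map_add, map_mul, map_zero, eval_Lf, eval_C, Matrix.cons_val_zero,
    Matrix.cons_val_one, Matrix.head_cons] at h0
  have keyα0 : 2*p*((s*p - r*q)*(t*p - u*q))*((a*p + b*q)*q - (k*p + d*q)*p) = 0 := by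
    linear_combination h0
  have h1 := h
  apply_fun (pderiv 1) at h1
  simp only [map_add, pderiv_mul, pderiv0_Lf, pderiv1_Lf, pderiv_C] at h1
  apply_fun (eval ![-q, p]) at h1
  simp only [map_add, map_mul, map_zero, eval_Lf, eval_C, Matrix.cons_val_zero,
    Matrix.cons_val_one, Matrix.head_cons] at h1
  have keyα1 : 2*q*((s*p - r*q)*(t*p - u*q))*((a*p + b*q)*q - (k*p + d*q)*p) = 0 := by
    linear_combination h1
  have hN : (s*p - r*q)*(t*p - u*q) ≠ 0 :=
    mul_ne_zero (fun hc => d1 (by linear_combination hc)) (fun hc => d2 (by linear_combination hc))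
  have eigα : (a*p + b*q)*q - (k*p + d*q)*p = 0 := by
    rcases not_and_or.mp hα0 with hp | hq
    · by_contra hK
      exact (mul_ne_zero (mul_ne_zero (mul_ne_zero two_ne_zero hp) hN) hK) keyα0
    · by_contra hK
      exact (mul_ne_zero (mul_ne_zero (mul_ne_zero two_ne_zero hq) hN) hK) keyα1
  -- final linear algebra
  have hΔ : (p*s - q*r)*((p*t - q*u)*(r*t - s*u)) ≠ 0 := mul_ne_zero d1 (mul_ne_zero d2 d3)
  have hbΔ : b * ((p*s - q*r)*((p*t - q*u)*(r*t - s*u))) = 0 := by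
    linear_combination (r*u*(r*t - s*u))*eigα + (p*u*(q*u - p*t))*eigβ + (p*r*(p*s - q*r))*eigγ
  have hkΔ : k * ((p*s - q*r)*((p*t - q*u)*(r*t - s*u))) = 0 := by
    linear_combination (s*t*(u*s - r*t))*eigα + (q*t*(p*t - u*q))*eigβ + (q*s*(r*q - p*s))*eigγ
  have hmΔ : (a - d) * ((p*s - q*r)*((p*t - q*u)*(r*t - s*u))) = 0 := by
    linear_combination ((s*u - r*t)*(s*u + r*t))*eigα + ((p*t - q*u)*(p*t + q*u))*eigβ
      + ((q*r - p*s)*(q*r + p*s))*eigγ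
  have hb0 : b = 0 := (mul_eq_zero.mp hbΔ).resolve_right hΔ
  have hk0 : k = 0 := (mul_eq_zero.mp hkΔ).resolve_right hΔ
  have hm0 : a - d = 0 := (mul_eq_zero.mp hmΔ).resolve_right hΔ
  have ha0 : a = 0 := by linear_combination (htr + hm0) / 2
  have hd0 : d = 0 := by linear_combination (htr - hm0) / 2
  ext i j
  fin_cases i <;> fin_cases j <;>
    simp only [Matrix.zero_apply] <;> assumption
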